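/- Let X be a Hilbert space, A a closed symmetric densely defined operator with domain D_m, and D_m ⊆ D ⊆ D_W ⊆ D_max satisfying: the graph norm and D_W-norm are equivalent on D_m, D_W is dense in D_max in the graph norm, and A_D := A*|_D is a self-adjoint Fredholm extension of A. Then the ranges satisfy ran(A*|_{D_W}) = ran(A*). -/

import Mathlib

/-- Let `A` be a closed symmetric densely defined operator in a Hilbert space `X`
with minimal domain `D_m`, adjoint `A*` with domain `D_max`, and intermediate
domains `D_m ⊆ D ⊆ D_W ⊆ D_max` satisfying the standard assumptions (graph norm
equivalent to the `D_W`-norm on `D_m`, `D_W` dense in `D_max` in the graph norm,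
and `A_D := A*|_D` a self-adjoint Fredholm extension of `A`). Then
`ran(A*|_{D_W}) = ran(A*)`. -/
theorem range_of_intermediate_extension
    {X : Type*} [NormedAddCommGroup X] [InnerProductSpace ℂ X] [CompleteSpace X]
    (Dm Dmax : Submodule ℂ X) (hDmmax : Dm ≤ Dmax)
    (hdense : Dense (Dm : Set X))
    (Astar : ↥Dmax →ₗ[ℂ] X)
    (hclosed : IsClosed {p : X × X | ∃ x : ↥Dmax, (x : X) ∈ Dm ∧ p.1 = ↑x ∧ p.2 = Astar x})
    (hadj_dom : ∀ y : X,
      (∃ z : X, ∀ x : ↥Dmax, (x : X) ∈ Dm →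
        (inner ℂ (Astar x) y : ℂ) = (inner ℂ ((x : X)) z : ℂ)) ↔ y ∈ Dmax)
    (hadj_eq : ∀ x y : ↥Dmax, (x : X) ∈ Dm →
      (inner ℂ (Astar x) ((y : X)) : ℂ) = (inner ℂ ((x : X)) (Astar y) : ℂ))
    (DW : Submodule ℂ X) (hDmW : Dm ≤ DW) (hWmax : DW ≤ Dmax)
    (NW : X → ℝ) (hNW_nonneg : ∀ x : X, 0 ≤ NW x)
    (hincl : ∃ c : ℝ, ∀ x : ↥Dmax, (x : X) ∈ DW →
      Real.sqrt (‖(x : X)‖ ^ 2 + ‖Astar x‖ ^ 2) ≤ c * NW (x : X))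
    (hequiv : ∃ c' : ℝ, ∀ x : ↥Dmax, (x : X) ∈ Dm →
      NW (x : X) ≤ c' * Real.sqrt (‖(x : X)‖ ^ 2 + ‖Astar x‖ ^ 2))
    (hWdense : ∀ (x : ↥Dmax) (ε : ℝ), 0 < ε → ∃ y : ↥Dmax, (y : X) ∈ DW ∧
      ‖(x : X) - (y : X)‖ ^ 2 + ‖Astar x - Astar y‖ ^ 2 < ε)
    -- the intermediate domain D with D_m ⊆ D ⊆ D_W:
    (D : Submodule ℂ X) (hDmD : Dm ≤ D) (hDW : D ≤ DW)
    -- A_D := A*|_D is symmetric and self-adjoint: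
    (hD_symm : ∀ x y : ↥Dmax, (x : X) ∈ D → (y : X) ∈ D →
      (inner ℂ (Astar x) ((y : X)) : ℂ) = (inner ℂ ((x : X)) (Astar y) : ℂ))
    (hD_sa : ∀ y : X,
      (∃ z : X, ∀ x : ↥Dmax, (x : X) ∈ D →
        (inner ℂ (Astar x) y : ℂ) = (inner ℂ ((x : X)) z : ℂ)) → y ∈ D)
    -- A_D is Fredholm: finite-dimensional kernel, closed range of finite codimension:
    (hD_kerfin : ∃ (n : ℕ) (f : Fin n → X), ∀ x : ↥Dmax, (x : X) ∈ D → Astar x = 0 →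
      (x : X) ∈ Submodule.span ℂ (Set.range f))
    (hD_ranclosed : IsClosed {z : X | ∃ x : ↥Dmax, (x : X) ∈ D ∧ Astar x = z})
    (hD_codim : ∃ (m : ℕ) (g : Fin m → X), ∀ z : X,
      ∃ w ∈ Submodule.span ℂ (Set.range g),
        z - w ∈ {z' : X | ∃ x : ↥Dmax, (x : X) ∈ D ∧ Astar x = z'}) :
    {z : X | ∃ x : ↥Dmax, (x : X) ∈ DW ∧ Astar x = z}
      = {z : X | ∃ x : ↥Dmax, Astar x = z} := by
  -- the range over DW and over D, as submodules
  set S : Submodule ℂ X := (DW.comap Dmax.subtype).map Astar with hS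
  set R : Submodule ℂ X := (D.comap Dmax.subtype).map Astar with hR
  have hSset : (S : Set X) = {z : X | ∃ x : ↥Dmax, (x : X) ∈ DW ∧ Astar x = z} := by
    ext z
    simp [hS, Submodule.mem_map, Submodule.mem_comap]
  have hRset : (R : Set X) = {z : X | ∃ x : ↥Dmax, (x : X) ∈ D ∧ Astar x = z} := by
    ext z
    simp [hR, Submodule.mem_map, Submodule.mem_comap]
  have hRS : R ≤ S := Submodule.map_mono (Submodule.comap_mono hDW)
  have hRclosed : IsClosed (R : Set X) := by rw [hRset]; exact hD_ranclosed
  -- S is closed: it contains the closed finite-codimensional R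
  obtain ⟨m, g, hg⟩ := hD_codim
  haveI : IsClosed ((R : Submodule ℂ X) : Set X) := hRclosed
  have hSclosed : IsClosed (S : Set X) := by
    set π : X →ₗ[ℂ] X ⧸ R := R.mkQ with hπ
    have hπcont : Continuous π := continuous_quot_mk
    have hkey : (S : Set X) = π ⁻¹' ((S.map π : Submodule ℂ (X ⧸ R)) : Set (X ⧸ R)) := by
      ext x
      constructor
      · intro hx
        exact Submodule.mem_map_of_mem hx
      · intro hx
        obtain ⟨s, hs, hsx⟩ := hx
        have hsx' : s - x ∈ R := (Submodule.Quotient.eq R).1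
          (by simpa [hπ, Submodule.mkQ_apply] using hsx)
        have hxs : x - s ∈ R := by simpa using R.neg_mem hsx'
        have : (x - s) + s ∈ S := S.add_mem (hRS hxs) hs
        simpa using this
    rw [hkey]
    apply IsClosed.preimage hπcont
    have hfin : FiniteDimensional ℂ (S.map π : Submodule ℂ (X ⧸ R)) := by
      have hle : S.map π ≤ (Submodule.span ℂ (Set.range g)).map π := by
        rintro _ ⟨s, hsS, rfl⟩
        obtain ⟨w, hw, hsw⟩ := hg s
        rw [← hRset] at hsw
        have : π s = π w := by
          simpa [hπ, Submodule.mkQ_apply] using (Submodule.Quotient.eq R).2 hsw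
        rw [this]
        exact Submodule.mem_map_of_mem hw
      haveI : FiniteDimensional ℂ (Submodule.span ℂ (Set.range g)) :=
        FiniteDimensional.span_of_finite ℂ (Set.finite_range g)
      haveI : FiniteDimensional ℂ ((Submodule.span ℂ (Set.range g)).map π) :=
        Module.Finite.map _ _
      exact Submodule.finiteDimensional_of_le hle
    exact Submodule.closed_of_finiteDimensional _
  -- now the density argument
  rw [← hSset]
  apply Set.eq_of_subset_of_subset
  · rintro z ⟨x, hxW, rfl⟩
    exact ⟨x, rfl⟩
  · rintro z ⟨x, rfl⟩
    have hmem : Astar x ∈ closure (S : Set X) := by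
      rw [Metric.mem_closure_iff]
      intro ε hε
      obtain ⟨y, hyW, hy⟩ := hWdense x (ε ^ 2) (by positivity)
      refine ⟨Astar y, ?_, ?_⟩
      · rw [hSset]
        exact ⟨y, hyW, rfl⟩
      · rw [dist_eq_norm]
        have h1 : ‖Astar x - Astar y‖ ^ 2 < ε ^ 2 := by
          have := sq_nonneg ‖(x : X) - (y : X)‖
          nlinarith
        nlinarith [norm_nonneg (Astar x - Astar y)]
    rwa [hSclosed.closure_eq] at hmem
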